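/- In the 2+1 dimensional Minkowski space with quadratic form t² − x² − y², the velocity-addition map given componentwise by u'_x = (γ⁻¹u_x + v_x + v_x(u·v)γ/(γ+1))/(1 + u·v), u'_y = (γ⁻¹u_y + v_y + v_y(u·v)γ/(γ+1))/(1 + u·v), where u·v = u_xv_x + u_yv_y and γ = (1 − |v|²)^{-1/2}, maps pairs of velocities with |u| < 1 and |v| < 1 to a velocity with |u'| < 1. -/

import Mathlib

theorem velocity_addition_2d_bounded
    (ux uy vx vy : ℝ)
    (hu : ux^2 + uy^2 < 1) (hv : vx^2 + vy^2 < 1)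
    (γ : ℝ) (hγ : γ = 1 / Real.sqrt (1 - (vx^2 + vy^2))) :
    ((γ⁻¹ * ux + vx + vx * (ux * vx + uy * vy) * γ / (γ + 1)) /
        (1 + (ux * vx + uy * vy)))^2 +
    ((γ⁻¹ * uy + vy + vy * (ux * vx + uy * vy) * γ / (γ + 1)) /
        (1 + (ux * vx + uy * vy)))^2 < 1 := by
  have hvnn : (0:ℝ) ≤ vx^2 + vy^2 := by positivity
  set s := Real.sqrt (1 - (vx^2 + vy^2)) with hsdef
  have hspos : 0 < s := Real.sqrt_pos.2 (by linarith)
  have hs2 : s^2 = 1 - (vx^2 + vy^2) := Real.sq_sqrt (by linarith)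
  set c := ux * vx + uy * vy with hc
  have hd : 0 < 1 + c := by
    nlinarith [sq_nonneg (ux*vy - uy*vx), sq_nonneg (ux + vx), sq_nonneg (uy + vy),
      sq_nonneg (ux*vx + uy*vy + 1)]
  have hγs : γ = 1 / s := hγ
  have hγinv : γ⁻¹ = s := by rw [hγs]; field_simp
  have hγ1 : γ + 1 = (1 + s) / s := by rw [hγs]; field_simp
  have h1s : (0:ℝ) < 1 + s := by linarith
  rw [hγinv, hγ1, hγs, div_pow, div_pow, ← add_div,
    div_lt_one (by positivity)]
  have key : ((s * ux + vx + vx * c * (1/s) / ((1+s)/s)) )^2 +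
      ((s * uy + vy + vy * c * (1/s) / ((1+s)/s)))^2
      = (1 + c)^2 - (1 - ux^2 - uy^2) * s^2 := by
    have h1 : vx * c * (1/s) / ((1+s)/s) = vx * c / (1 + s) := by
      field_simp
    have h2 : vy * c * (1/s) / ((1+s)/s) = vy * c / (1 + s) := by
      field_simp
    rw [h1, h2]
    field_simp
    linear_combination (1 + s + c)^2 * hs2
  calc ((s * ux + vx + vx * c * (1/s) / ((1+s)/s)))^2 +
      ((s * uy + vy + vy * c * (1/s) / ((1+s)/s)))^2
      = (1 + c)^2 - (1 - ux^2 - uy^2) * s^2 := key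
    _ < (1 + c)^2 := by nlinarith [sq_nonneg s]
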